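/- Let φ_1 ∈ NN(W_1, D_1, K_1) have output dimension equal to the input dimension of φ_2 ∈ NN(W_2, D_2, K_2). Then the composition φ_2 ∘ φ_1 belongs to NN(max{W_1, W_2}, D_1 + D_2, (√2)^{D_1} K_2 √(K_1² + 2)). -/

import Mathlib

open scoped BigOperators

noncomputable section

/-- ReLU activation. -/
def relu (t : ℝ) : ℝ := max 0 t

/-- Squared Frobenius norm of a matrix. -/
def frobSq {m n : ℕ} (A : Matrix (Fin m) (Fin n) ℝ) : ℝ := ∑ i, ∑ j, (A i j) ^ 2

/-- Frobenius norm of a matrix. -/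
def frob {m n : ℕ} (A : Matrix (Fin m) (Fin n) ℝ) : ℝ := Real.sqrt (frobSq A)

/-- Squared Euclidean norm of a vector. -/
def sqNorm {n : ℕ} (v : Fin n → ℝ) : ℝ := ∑ i, (v i) ^ 2

/-- A ReLU network of depth `D`, input dimension `d` and output dimension `k`:
layer widths `N 0 = d, N 1, …, N D, N (D+1) = k`, weight matrices `A ℓ` and biases `b ℓ`. -/
structure ReluNetwork (D d k : ℕ) where
  N : ℕ → ℕ
  hN0 : N 0 = d
  hNlast : N (D + 1) = k
  A : (ℓ : ℕ) → Matrix (Fin (N (ℓ + 1))) (Fin (N ℓ)) ℝ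
  b : (ℓ : ℕ) → Fin (N (ℓ + 1)) → ℝ

namespace ReluNetwork

variable {D d k : ℕ}

/-- Output of the `ℓ`-th hidden layer (after the ReLU). -/
def layer (net : ReluNetwork D d k) : (ℓ : ℕ) → (Fin d → ℝ) → Fin (net.N ℓ) → ℝ
  | 0 => fun x i => x (Fin.cast net.hN0 i)
  | (ℓ + 1) => fun x i =>
      relu ((∑ j, net.A ℓ i j * net.layer ℓ x j) + net.b ℓ i)

/-- The function realized by the network:
`f_θ(x) = A_D σ(A_{D-1} σ( ⋯ σ(A_0 x + b_0) ⋯ ) + b_{D-1})`. -/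
def realize (net : ReluNetwork D d k) (x : Fin d → ℝ) : Fin k → ℝ :=
  fun i => ∑ j, net.A D (Fin.cast net.hNlast.symm i) j * net.layer D x j

/-- Multiplicative Frobenius norm constraint
`κ(θ) = ‖A_D‖_F ∏_{ℓ<D} √(‖A_ℓ‖_F² + ‖b_ℓ‖² + 1)`. -/
def kappa (net : ReluNetwork D d k) : ℝ :=
  frob (net.A D) *
    ∏ ℓ ∈ Finset.range D, Real.sqrt (frobSq (net.A ℓ) + sqNorm (net.b ℓ) + 1)

/-- All (hidden) layer widths are at most `W`. -/
def widthLe (net : ReluNetwork D d k) (W : ℕ) : Prop :=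
  ∀ ℓ, 0 < ℓ → ℓ ≤ D → net.N ℓ ≤ W

end ReluNetwork

/-- The norm-constrained class `NN(W, D, K)` of functions `ℝ^d → ℝ^k` realized by depth-`D`
ReLU networks with all layer widths at most `W` and `κ(θ) ≤ K`. -/
def NNclass (d k W D : ℕ) (K : ℝ) : Set ((Fin d → ℝ) → Fin k → ℝ) :=
  {f | ∃ net : ReluNetwork D d k, net.widthLe W ∧ net.kappa ≤ K ∧ net.realize = f}


lemma relu_mul (c t : ℝ) (hc : 0 ≤ c) : relu (c * t) = c * relu t := by
  simp [relu, mul_max_of_nonneg _ _ hc]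

lemma frobSq_nonneg {m n : ℕ} (A : Matrix (Fin m) (Fin n) ℝ) : 0 ≤ frobSq A := by
  apply Finset.sum_nonneg; intro i _; apply Finset.sum_nonneg; intro j _; positivity

lemma sqNorm_nonneg {n : ℕ} (v : Fin n → ℝ) : 0 ≤ sqNorm v := by
  apply Finset.sum_nonneg; intro i _; positivity

lemma frob_nonneg {m n : ℕ} (A : Matrix (Fin m) (Fin n) ℝ) : 0 ≤ frob A := Real.sqrt_nonneg _

lemma frob_sq {m n : ℕ} (A : Matrix (Fin m) (Fin n) ℝ) : frob A ^ 2 = frobSq A :=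
  Real.sq_sqrt (frobSq_nonneg A)

lemma frobSq_smul {m n : ℕ} (c : ℝ) (A : Matrix (Fin m) (Fin n) ℝ) :
    frobSq (fun i j => c * A i j) = c ^ 2 * frobSq A := by
  simp [frobSq, Finset.mul_sum, mul_pow]

lemma sqNorm_smul {n : ℕ} (c : ℝ) (v : Fin n → ℝ) :
    sqNorm (fun i => c * v i) = c ^ 2 * sqNorm v := by
  simp [sqNorm, Finset.mul_sum, mul_pow]

lemma frobSq_mul_le {m n p : ℕ} (A : Matrix (Fin m) (Fin n) ℝ) (B : Matrix (Fin n) (Fin p) ℝ) :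
    frobSq (fun i j => ∑ l, A i l * B l j) ≤ frobSq A * frobSq B := by
  have h1 : ∀ i j, (∑ l, A i l * B l j) ^ 2 ≤ (∑ l, A i l ^ 2) * (∑ l, B l j ^ 2) :=
    fun i j => Finset.sum_mul_sq_le_sq_mul_sq _ _ _
  calc frobSq (fun i j => ∑ l, A i l * B l j)
      ≤ ∑ i, ∑ j, (∑ l, A i l ^ 2) * (∑ l, B l j ^ 2) := by
        apply Finset.sum_le_sum; intro i _; apply Finset.sum_le_sum; intro j _; exact h1 i j
    _ = frobSq A * frobSq B := by
        rw [frobSq, frobSq, Finset.sum_mul]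
        congr 1; ext i
        rw [← Finset.mul_sum, Finset.sum_comm]

lemma sum_fin_cast {m n : ℕ} (h : m = n) (f : Fin n → ℝ) :
    ∑ i : Fin m, f (Fin.cast h i) = ∑ i : Fin n, f i :=
  Fintype.sum_equiv (finCongr h) _ _ (fun _ => rfl)

lemma sqrt_two_pow (n : ℕ) : Real.sqrt 2 ^ n = Real.sqrt (2 ^ n) := by
  induction n with
  | zero => simp
  | succ n ih =>
      rw [pow_succ, pow_succ, ih, ← Real.sqrt_mul (by positivity)]

namespace ReluNetwork

variable {D d k : ℕ}

lemma kappa_nonneg (net : ReluNetwork D d k) : 0 ≤ net.kappa := by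
  apply mul_nonneg (frob_nonneg _)
  exact Finset.prod_nonneg (fun ℓ _ => Real.sqrt_nonneg _)

/-- Per-layer normalization factor. -/
def cfac (net : ReluNetwork D d k) (ℓ : ℕ) : ℝ :=
  (Real.sqrt (frobSq (net.A ℓ) + sqNorm (net.b ℓ) + 1))⁻¹

def Cfac (net : ReluNetwork D d k) (ℓ : ℕ) : ℝ := ∏ j ∈ Finset.range ℓ, net.cfac j

lemma cfac_pos (net : ReluNetwork D d k) (ℓ : ℕ) : 0 < net.cfac ℓ := by
  apply inv_pos.2
  apply Real.sqrt_pos.2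
  have := frobSq_nonneg (net.A ℓ); have := sqNorm_nonneg (net.b ℓ); linarith

lemma cfac_le_one (net : ReluNetwork D d k) (ℓ : ℕ) : net.cfac ℓ ≤ 1 := by
  rw [cfac, inv_le_one_iff₀]
  right
  have h0 : (0:ℝ) ≤ frobSq (net.A ℓ) + sqNorm (net.b ℓ) + 1 := by
    have := frobSq_nonneg (net.A ℓ); have := sqNorm_nonneg (net.b ℓ); linarith
  nlinarith [Real.sq_sqrt h0, Real.sqrt_nonneg (frobSq (net.A ℓ) + sqNorm (net.b ℓ) + 1),
    frobSq_nonneg (net.A ℓ), sqNorm_nonneg (net.b ℓ)]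

lemma Cfac_pos (net : ReluNetwork D d k) (ℓ : ℕ) : 0 < net.Cfac ℓ :=
  Finset.prod_pos (fun j _ => net.cfac_pos j)

lemma Cfac_le_one (net : ReluNetwork D d k) (ℓ : ℕ) : net.Cfac ℓ ≤ 1 :=
  Finset.prod_le_one (fun j _ => (net.cfac_pos j).le) (fun j _ => net.cfac_le_one j)

/-- The normalized network. -/
def normalized (net : ReluNetwork D d k) : ReluNetwork D d k where
  N := net.N
  hN0 := net.hN0
  hNlast := net.hNlast
  A := fun ℓ => if ℓ = D then fun i j => (net.Cfac D)⁻¹ * net.A ℓ i j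
                else fun i j => net.cfac ℓ * net.A ℓ i j
  b := fun ℓ i => net.Cfac (ℓ + 1) * net.b ℓ i

lemma normalized_layer (net : ReluNetwork D d k) (ℓ : ℕ) (hℓ : ℓ ≤ D) (x : Fin d → ℝ)
    (i : Fin (net.N ℓ)) :
    net.normalized.layer ℓ x i = net.Cfac ℓ * net.layer ℓ x i := by
  induction ℓ with
  | zero => simp [layer, normalized, Cfac]
  | succ ℓ ih =>
      have hne : ℓ ≠ D := by omega
      have hC : net.Cfac (ℓ+1) = net.Cfac ℓ * net.cfac ℓ := Finset.prod_range_succ _ _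
      have hCnn : 0 ≤ net.Cfac (ℓ+1) := (net.Cfac_pos _).le
      show relu _ = _ * relu _
      rw [← relu_mul _ _ hCnn]
      congr 1
      rw [mul_add]
      congr 1
      rw [Finset.mul_sum]
      apply Finset.sum_congr rfl
      intro j _
      have hA : net.normalized.A ℓ i j = net.cfac ℓ * net.A ℓ i j := by
        exact congrArg (fun M : Matrix (Fin (net.N (ℓ+1))) (Fin (net.N ℓ)) ℝ => M i j)
          (if_neg hne : net.normalized.A ℓ = fun i j => net.cfac ℓ * net.A ℓ i j)
      rw [hA, ih (by omega) j, hC]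
      ring

lemma normalized_realize (net : ReluNetwork D d k) : net.normalized.realize = net.realize := by
  funext x i
  show ∑ j, net.normalized.A D _ j * net.normalized.layer D x j = _
  rw [realize]
  have hC := net.Cfac_pos D
  apply Finset.sum_congr rfl
  intro j _
  rw [normalized_layer net D le_rfl x j]
  have hA : net.normalized.A D (Fin.cast net.hNlast.symm i) j
      = (net.Cfac D)⁻¹ * net.A D (Fin.cast net.hNlast.symm i) j := by
    exact congrArg (fun M : Matrix (Fin (net.N (D+1))) (Fin (net.N D)) ℝ =>
        M (Fin.cast net.hNlast.symm i) j)
      (if_pos rfl : net.normalized.A D = fun i j => (net.Cfac D)⁻¹ * net.A D i j)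
  rw [hA]
  field_simp

lemma normalized_bound (net : ReluNetwork D d k) (ℓ : ℕ) (hℓ : ℓ < D) :
    frobSq (net.normalized.A ℓ) + sqNorm (net.normalized.b ℓ) ≤ 1 := by
  have hne : ℓ ≠ D := by omega
  have hA : net.normalized.A ℓ = fun i j => net.cfac ℓ * net.A ℓ i j := by
    exact if_neg hne
  have hfs : frobSq (net.normalized.A ℓ) = net.cfac ℓ ^ 2 * frobSq (net.A ℓ) := by
    rw [hA]; exact frobSq_smul _ _
  have hbs : sqNorm (net.normalized.b ℓ) = net.Cfac (ℓ+1) ^ 2 * sqNorm (net.b ℓ) :=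
    sqNorm_smul _ _
  rw [hfs, hbs]
  have hC2 : net.Cfac (ℓ+1) ^ 2 ≤ net.cfac ℓ ^ 2 := by
    apply pow_le_pow_left₀ (net.Cfac_pos _).le
    rw [Cfac, Finset.prod_range_succ]
    calc (∏ j ∈ Finset.range ℓ, net.cfac j) * net.cfac ℓ ≤ 1 * net.cfac ℓ := by
          apply mul_le_mul_of_nonneg_right (net.Cfac_le_one ℓ) (net.cfac_pos ℓ).le
      _ = net.cfac ℓ := one_mul _
  have key : net.cfac ℓ ^ 2 * (frobSq (net.A ℓ) + sqNorm (net.b ℓ)) ≤ 1 := by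
    have h0 : (0:ℝ) ≤ frobSq (net.A ℓ) + sqNorm (net.b ℓ) := by
      have := frobSq_nonneg (net.A ℓ); have := sqNorm_nonneg (net.b ℓ); linarith
    have hs : Real.sqrt (frobSq (net.A ℓ) + sqNorm (net.b ℓ) + 1) ^ 2
        = frobSq (net.A ℓ) + sqNorm (net.b ℓ) + 1 := Real.sq_sqrt (by linarith)
    rw [cfac, inv_pow, hs, inv_mul_le_iff₀ (by linarith)]
    linarith
  calc net.cfac ℓ ^ 2 * frobSq (net.A ℓ) + net.Cfac (ℓ+1) ^ 2 * sqNorm (net.b ℓ)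
      ≤ net.cfac ℓ ^ 2 * frobSq (net.A ℓ) + net.cfac ℓ ^ 2 * sqNorm (net.b ℓ) := by
        have := sqNorm_nonneg (net.b ℓ)
        nlinarith
    _ = net.cfac ℓ ^ 2 * (frobSq (net.A ℓ) + sqNorm (net.b ℓ)) := by ring
    _ ≤ 1 := key

end ReluNetwork

namespace ReluNetwork

variable {D d k : ℕ}

lemma frobSq_cast {m n m' n' : ℕ} (h1 : m' = m) (h2 : n' = n) (A : Matrix (Fin m) (Fin n) ℝ) :
    frobSq (fun (i : Fin m') (j : Fin n') => A (Fin.cast h1 i) (Fin.cast h2 j)) = frobSq A := by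
  unfold frobSq
  exact Fintype.sum_equiv (finCongr h1) _ _
    (fun i => Fintype.sum_equiv (finCongr h2) _ _ (fun j => rfl))

lemma sqNorm_cast {n n' : ℕ} (h : n' = n) (v : Fin n → ℝ) :
    sqNorm (fun (i : Fin n') => v (Fin.cast h i)) = sqNorm v := by
  unfold sqNorm
  exact Fintype.sum_equiv (finCongr h) _ _ (fun i => rfl)

lemma normalized_kappa (net : ReluNetwork D d k) :
    net.normalized.kappa ≤ Real.sqrt 2 ^ D * net.kappa := by
  have hfrob : frob (net.normalized.A D) = (net.Cfac D)⁻¹ * frob (net.A D) := by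
    have hA : net.normalized.A D = fun i j => (net.Cfac D)⁻¹ * net.A D i j := by
      exact if_pos rfl
    have h1 : frobSq (net.normalized.A D) = ((net.Cfac D)⁻¹) ^ 2 * frobSq (net.A D) := by
      rw [hA]; exact frobSq_smul _ _
    rw [frob, h1, Real.sqrt_mul (by positivity), Real.sqrt_sq (inv_nonneg.2 (net.Cfac_pos D).le)]
    rfl
  have hP : ∏ ℓ ∈ Finset.range D,
      Real.sqrt (frobSq (net.normalized.A ℓ) + sqNorm (net.normalized.b ℓ) + 1)
      ≤ Real.sqrt 2 ^ D := by
    calc ∏ ℓ ∈ Finset.range D,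
        Real.sqrt (frobSq (net.normalized.A ℓ) + sqNorm (net.normalized.b ℓ) + 1)
        ≤ ∏ ℓ ∈ Finset.range D, Real.sqrt 2 := by
          apply Finset.prod_le_prod (fun ℓ _ => Real.sqrt_nonneg _)
          intro ℓ hℓ
          apply Real.sqrt_le_sqrt
          have := net.normalized_bound ℓ (Finset.mem_range.1 hℓ)
          linarith
      _ = Real.sqrt 2 ^ D := by rw [Finset.prod_const, Finset.card_range]
  have hCinv : (net.Cfac D)⁻¹
      = ∏ ℓ ∈ Finset.range D, Real.sqrt (frobSq (net.A ℓ) + sqNorm (net.b ℓ) + 1) := by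
    rw [Cfac, ← Finset.prod_inv_distrib]
    exact Finset.prod_congr rfl (fun ℓ _ => by rw [cfac, inv_inv])
  calc net.normalized.kappa
      ≤ frob (net.normalized.A D) * Real.sqrt 2 ^ D := by
        exact mul_le_mul_of_nonneg_left hP (frob_nonneg _)
    _ = Real.sqrt 2 ^ D * ((net.Cfac D)⁻¹ * frob (net.A D)) := by rw [hfrob]; ring
    _ = Real.sqrt 2 ^ D * net.kappa := by rw [hCinv, kappa]; ring

end ReluNetwork

namespace ReluNetwork

variable {D₁ D₂ d k m : ℕ}

def compN (n1 : ReluNetwork D₁ d k) (n2 : ReluNetwork D₂ k m) (ℓ : ℕ) : ℕ :=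
  if ℓ ≤ D₁ then n1.N ℓ else n2.N (ℓ - D₁)

lemma compN_le (n1 : ReluNetwork D₁ d k) (n2 : ReluNetwork D₂ k m) {ℓ : ℕ} (h : ℓ ≤ D₁) :
    compN n1 n2 ℓ = n1.N ℓ := if_pos h

lemma compN_gt (n1 : ReluNetwork D₁ d k) (n2 : ReluNetwork D₂ k m) {ℓ : ℕ} (h : D₁ < ℓ) :
    compN n1 n2 ℓ = n2.N (ℓ - D₁) := if_neg (by omega)

lemma compN_succ_gt (n1 : ReluNetwork D₁ d k) (n2 : ReluNetwork D₂ k m) {ℓ : ℕ} (h : D₁ ≤ ℓ) :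
    compN n1 n2 (ℓ + 1) = n2.N ((ℓ - D₁) + 1) := by
  rw [compN_gt n1 n2 (by omega), show ℓ + 1 - D₁ = (ℓ - D₁) + 1 from by omega]

lemma compN_D1succ (n1 : ReluNetwork D₁ d k) (n2 : ReluNetwork D₂ k m) :
    compN n1 n2 (D₁ + 1) = n2.N 1 := by
  rw [compN_gt n1 n2 (by omega), show D₁ + 1 - D₁ = 1 from by omega]

/-- The composed network. -/
def comp (n1 : ReluNetwork D₁ d k) (n2 : ReluNetwork D₂ k m) : ReluNetwork (D₁ + D₂) d m where
  N := compN n1 n2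
  hN0 := (compN_le n1 n2 (Nat.zero_le _)).trans n1.hN0
  hNlast := by
    rw [compN_gt n1 n2 (by omega), show D₁ + D₂ + 1 - D₁ = D₂ + 1 from by omega]
    exact n2.hNlast
  A := fun ℓ =>
    if h : ℓ < D₁ then fun i j =>
      n1.A ℓ (Fin.cast (compN_le n1 n2 (by omega)) i) (Fin.cast (compN_le n1 n2 (by omega)) j)
    else if h2 : ℓ = D₁ then fun i j =>
      ∑ l : Fin (n1.N (D₁ + 1)),
        n2.A 0 (Fin.cast (by rw [h2]; exact compN_D1succ n1 n2) i)
          (Fin.cast (n1.hNlast.trans n2.hN0.symm) l)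
        * n1.A D₁ l (Fin.cast (by rw [compN_le n1 n2 (le_of_eq h2), h2]) j)
    else fun i j =>
      n2.A (ℓ - D₁) (Fin.cast (compN_succ_gt n1 n2 (by omega)) i)
        (Fin.cast (compN_gt n1 n2 (by omega)) j)
  b := fun ℓ =>
    if h : ℓ < D₁ then fun i => n1.b ℓ (Fin.cast (compN_le n1 n2 (by omega)) i)
    else if h2 : ℓ = D₁ then fun i =>
      n2.b 0 (Fin.cast (by rw [h2]; exact compN_D1succ n1 n2) i)
    else fun i =>
      n2.b (ℓ - D₁) (Fin.cast (compN_succ_gt n1 n2 (by omega)) i)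

variable (n1 : ReluNetwork D₁ d k) (n2 : ReluNetwork D₂ k m)

lemma comp_A_lt {ℓ : ℕ} (h : ℓ < D₁) (i : Fin ((comp n1 n2).N (ℓ + 1)))
    (j : Fin ((comp n1 n2).N ℓ)) :
    (comp n1 n2).A ℓ i j = n1.A ℓ (Fin.cast (compN_le n1 n2 (by omega)) i)
      (Fin.cast (compN_le n1 n2 (by omega)) j) := by
  have e : (comp n1 n2).A ℓ = fun i j => n1.A ℓ (Fin.cast (compN_le n1 n2 (by omega)) i)
      (Fin.cast (compN_le n1 n2 (by omega)) j) := dif_pos h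
  exact congrArg (fun M : Matrix _ _ ℝ => M i j) e

lemma comp_A_eq (i : Fin ((comp n1 n2).N (D₁ + 1))) (j : Fin ((comp n1 n2).N D₁)) :
    (comp n1 n2).A D₁ i j = ∑ l : Fin (n1.N (D₁ + 1)),
      n2.A 0 (Fin.cast (compN_D1succ n1 n2) i)
        (Fin.cast (n1.hNlast.trans n2.hN0.symm) l)
      * n1.A D₁ l (Fin.cast (compN_le n1 n2 le_rfl) j) := by
  have e : (comp n1 n2).A D₁ = fun i j => ∑ l : Fin (n1.N (D₁ + 1)),
      n2.A 0 (Fin.cast (compN_D1succ n1 n2) i)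
        (Fin.cast (n1.hNlast.trans n2.hN0.symm) l)
      * n1.A D₁ l (Fin.cast (compN_le n1 n2 le_rfl) j) :=
    (dif_neg (lt_irrefl D₁)).trans (dif_pos rfl)
  exact congrArg (fun M : Matrix _ _ ℝ => M i j) e

lemma comp_A_gt {ℓ : ℕ} (h : D₁ < ℓ) (i : Fin ((comp n1 n2).N (ℓ + 1)))
    (j : Fin ((comp n1 n2).N ℓ)) :
    (comp n1 n2).A ℓ i j = n2.A (ℓ - D₁)
      (Fin.cast (compN_succ_gt n1 n2 h.le) i)
      (Fin.cast (compN_gt n1 n2 h) j) := by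
  have e : (comp n1 n2).A ℓ = fun i j => n2.A (ℓ - D₁)
      (Fin.cast (compN_succ_gt n1 n2 h.le) i)
      (Fin.cast (compN_gt n1 n2 h) j) :=
    (dif_neg (by omega : ¬ ℓ < D₁)).trans (dif_neg (by omega : ¬ ℓ = D₁))
  exact congrArg (fun M : Matrix _ _ ℝ => M i j) e

lemma comp_b_lt {ℓ : ℕ} (h : ℓ < D₁) (i : Fin ((comp n1 n2).N (ℓ + 1))) :
    (comp n1 n2).b ℓ i = n1.b ℓ (Fin.cast (compN_le n1 n2 (by omega)) i) := by
  simp only [comp, dif_pos h]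

lemma comp_b_eq (i : Fin ((comp n1 n2).N (D₁ + 1))) :
    (comp n1 n2).b D₁ i = n2.b 0 (Fin.cast (compN_D1succ n1 n2) i) := by
  simp only [comp, dif_neg (lt_irrefl D₁), dif_pos rfl, dite_true]

lemma comp_b_gt {ℓ : ℕ} (h : D₁ < ℓ) (i : Fin ((comp n1 n2).N (ℓ + 1))) :
    (comp n1 n2).b ℓ i = n2.b (ℓ - D₁) (Fin.cast (compN_succ_gt n1 n2 h.le) i) := by
  simp only [comp, dif_neg (by omega : ¬ ℓ < D₁), dif_neg (by omega : ¬ ℓ = D₁)]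

end ReluNetwork

namespace ReluNetwork

variable {D₁ D₂ d k m : ℕ}

lemma A_congr {D d k : ℕ} (net : ReluNetwork D d k) {ℓ ℓ' : ℕ} (h : ℓ = ℓ')
    (i : Fin (net.N (ℓ + 1))) (j : Fin (net.N ℓ)) :
    net.A ℓ i j = net.A ℓ' (Fin.cast (by rw [h]) i) (Fin.cast (by rw [h]) j) := by
  subst h; rfl

lemma b_congr {D d k : ℕ} (net : ReluNetwork D d k) {ℓ ℓ' : ℕ} (h : ℓ = ℓ')
    (i : Fin (net.N (ℓ + 1))) :
    net.b ℓ i = net.b ℓ' (Fin.cast (by rw [h]) i) := by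
  subst h; rfl

variable (n1 : ReluNetwork D₁ d k) (n2 : ReluNetwork D₂ k m)

lemma compN_add {ℓ : ℕ} (h : 1 ≤ ℓ) : compN n1 n2 (D₁ + ℓ) = n2.N ℓ := by
  rw [compN_gt n1 n2 (by omega)]; congr 1; omega

lemma compN_add_one (ℓ : ℕ) : compN n1 n2 (D₁ + ℓ + 1) = n2.N (ℓ + 1) := by
  rw [compN_gt n1 n2 (by omega)]; congr 1; omega

lemma comp_A_gt' {ℓ : ℕ} (h : 1 ≤ ℓ) (i : Fin ((comp n1 n2).N (D₁ + ℓ + 1)))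
    (j : Fin ((comp n1 n2).N (D₁ + ℓ))) :
    (comp n1 n2).A (D₁ + ℓ) i j = n2.A ℓ (Fin.cast (compN_add_one n1 n2 ℓ) i)
      (Fin.cast (compN_add n1 n2 h) j) := by
  have h1 : ¬ (D₁ + ℓ < D₁) := by omega
  have h2 : ¬ (D₁ + ℓ = D₁) := by omega
  simp only [comp, dif_neg h1, dif_neg h2]
  refine (comp_A_gt n1 n2 (by omega : D₁ < D₁ + ℓ) i j).trans ?_
  exact A_congr n2 (ℓ := D₁ + ℓ - D₁) (ℓ' := ℓ) (by omega) _ _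

lemma comp_b_gt' {ℓ : ℕ} (h : 1 ≤ ℓ) (i : Fin ((comp n1 n2).N (D₁ + ℓ + 1))) :
    (comp n1 n2).b (D₁ + ℓ) i = n2.b ℓ (Fin.cast (compN_add_one n1 n2 ℓ) i) := by
  have h1 : ¬ (D₁ + ℓ < D₁) := by omega
  have h2 : ¬ (D₁ + ℓ = D₁) := by omega
  simp only [comp, dif_neg h1, dif_neg h2]
  exact b_congr n2 (by omega) _

lemma comp_layer_le (ℓ : ℕ) (hℓ : ℓ ≤ D₁) (x : Fin d → ℝ) (i : Fin ((comp n1 n2).N ℓ)) :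
    (comp n1 n2).layer ℓ x i = n1.layer ℓ x (Fin.cast (compN_le n1 n2 hℓ) i) := by
  induction ℓ with
  | zero => rfl
  | succ ℓ ih =>
      have h1 : ℓ < D₁ := by omega
      show relu _ = relu _
      congr 1
      congr 1
      · calc ∑ j, (comp n1 n2).A ℓ i j * (comp n1 n2).layer ℓ x j
            = ∑ j : Fin (compN n1 n2 ℓ),
              (fun j' : Fin (n1.N ℓ) =>
                n1.A ℓ (Fin.cast (compN_le n1 n2 (by omega)) i) j' * n1.layer ℓ x j')
                (Fin.cast (compN_le n1 n2 h1.le) j) := by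
              apply Finset.sum_congr rfl
              intro j _
              simp only
              rw [comp_A_lt n1 n2 h1, ih (by omega)]
          _ = _ := sum_fin_cast (compN_le n1 n2 h1.le)
              (fun j' : Fin (n1.N ℓ) =>
                n1.A ℓ (Fin.cast (compN_le n1 n2 (by omega)) i) j' * n1.layer ℓ x j')
      · exact comp_b_lt n1 n2 h1 i

/-- The key sum identity at the junction layer. -/
lemma comp_junction_sum (x : Fin d → ℝ) (i : Fin (n2.N 1)) :
    ∑ j, (comp n1 n2).A D₁ (Fin.cast (compN_D1succ n1 n2).symm i) j
        * (comp n1 n2).layer D₁ x j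
      = ∑ j' : Fin (n2.N 0), n2.A 0 i j' * n1.realize x (Fin.cast n2.hN0 j') := by
  calc ∑ j, (comp n1 n2).A D₁ (Fin.cast (compN_D1succ n1 n2).symm i) j
        * (comp n1 n2).layer D₁ x j
      = ∑ j : Fin (compN n1 n2 D₁),
        (fun j' : Fin (n1.N D₁) =>
          (∑ l : Fin (n1.N (D₁ + 1)),
            n2.A 0 i (Fin.cast (n1.hNlast.trans n2.hN0.symm) l) * n1.A D₁ l j')
          * n1.layer D₁ x j')
          (Fin.cast (compN_le n1 n2 le_rfl) j) := by
        apply Finset.sum_congr rfl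
        intro j _
        simp only
        rw [comp_A_eq n1 n2, comp_layer_le n1 n2 D₁ le_rfl]
        rfl
    _ = ∑ j' : Fin (n1.N D₁),
        (∑ l : Fin (n1.N (D₁ + 1)),
          n2.A 0 i (Fin.cast (n1.hNlast.trans n2.hN0.symm) l) * n1.A D₁ l j')
        * n1.layer D₁ x j' := sum_fin_cast (compN_le n1 n2 le_rfl)
          (fun j' : Fin (n1.N D₁) =>
            (∑ l : Fin (n1.N (D₁ + 1)),
              n2.A 0 i (Fin.cast (n1.hNlast.trans n2.hN0.symm) l) * n1.A D₁ l j')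
            * n1.layer D₁ x j')
    _ = ∑ l : Fin (n1.N (D₁ + 1)),
        n2.A 0 i (Fin.cast (n1.hNlast.trans n2.hN0.symm) l)
          * ∑ j' : Fin (n1.N D₁), n1.A D₁ l j' * n1.layer D₁ x j' := by
        simp_rw [Finset.sum_mul]
        rw [Finset.sum_comm]
        simp_rw [mul_assoc, ← Finset.mul_sum]
    _ = ∑ l : Fin (n1.N (D₁ + 1)),
        (fun j' : Fin (n2.N 0) => n2.A 0 i j' * n1.realize x (Fin.cast n2.hN0 j'))
          (Fin.cast (n1.hNlast.trans n2.hN0.symm) l) := by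
        apply Finset.sum_congr rfl
        intro l _
        rfl
    _ = _ := sum_fin_cast (n1.hNlast.trans n2.hN0.symm)
        (fun j' : Fin (n2.N 0) => n2.A 0 i j' * n1.realize x (Fin.cast n2.hN0 j'))

lemma comp_layer_gt (x : Fin d → ℝ) (ℓ : ℕ) (hℓ : 1 ≤ ℓ) :
    ∀ i : Fin ((comp n1 n2).N (D₁ + ℓ)),
    (comp n1 n2).layer (D₁ + ℓ) x i
      = n2.layer ℓ (n1.realize x) (Fin.cast (compN_add n1 n2 hℓ) i) := by
  induction ℓ, hℓ using Nat.le_induction with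
  | base =>
      intro i
      show relu _ = relu _
      congr 1
      congr 1
      · exact comp_junction_sum n1 n2 x (Fin.cast (compN_D1succ n1 n2) i)
      · exact comp_b_eq n1 n2 i
  | succ ℓ hℓ ih =>
      intro i
      show relu _ = relu _
      congr 1
      congr 1
      · calc ∑ j, (comp n1 n2).A (D₁ + ℓ) i j * (comp n1 n2).layer (D₁ + ℓ) x j
            = ∑ j : Fin (compN n1 n2 (D₁ + ℓ)),
              (fun j' : Fin (n2.N ℓ) =>
                n2.A ℓ (Fin.cast (compN_add_one n1 n2 ℓ) i) j'
                  * n2.layer ℓ (n1.realize x) j')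
                (Fin.cast (compN_add n1 n2 hℓ) j) := by
              apply Finset.sum_congr rfl
              intro j _
              simp only
              rw [comp_A_gt' n1 n2 hℓ, ih j]
          _ = _ := sum_fin_cast (compN_add n1 n2 hℓ)
              (fun j' : Fin (n2.N ℓ) =>
                n2.A ℓ (Fin.cast (compN_add_one n1 n2 ℓ) i) j'
                  * n2.layer ℓ (n1.realize x) j')
      · exact comp_b_gt' n1 n2 hℓ i

lemma comp_realize : (comp n1 n2).realize = fun x => n2.realize (n1.realize x) := by
  funext x i
  rcases Nat.eq_zero_or_pos D₂ with h | h
  · subst h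
    exact comp_junction_sum n1 n2 x (Fin.cast n2.hNlast.symm i)
  · obtain ⟨E, rfl⟩ : ∃ E, D₂ = E + 1 := ⟨D₂ - 1, by omega⟩
    show ∑ j, (comp n1 n2).A (D₁ + (E + 1)) (Fin.cast (comp n1 n2).hNlast.symm i) j
        * (comp n1 n2).layer (D₁ + (E + 1)) x j = _
    calc ∑ j, (comp n1 n2).A (D₁ + (E + 1)) (Fin.cast (comp n1 n2).hNlast.symm i) j
          * (comp n1 n2).layer (D₁ + (E + 1)) x j
        = ∑ j : Fin (compN n1 n2 (D₁ + (E + 1))),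
          (fun j' : Fin (n2.N (E + 1)) =>
            n2.A (E + 1) (Fin.cast n2.hNlast.symm i) j' * n2.layer (E + 1) (n1.realize x) j')
            (Fin.cast (compN_add n1 n2 (by omega)) j) := by
          apply Finset.sum_congr rfl
          intro j _
          simp only
          rw [comp_A_gt' n1 n2 (by omega), comp_layer_gt n1 n2 x (E + 1) (by omega) j]
          rfl
      _ = ∑ j' : Fin (n2.N (E + 1)),
          n2.A (E + 1) (Fin.cast n2.hNlast.symm i) j' * n2.layer (E + 1) (n1.realize x) j' :=
          sum_fin_cast (compN_add n1 n2 (by omega))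
            (fun j' : Fin (n2.N (E + 1)) =>
              n2.A (E + 1) (Fin.cast n2.hNlast.symm i) j' * n2.layer (E + 1) (n1.realize x) j')
      _ = n2.realize (n1.realize x) i := rfl

end ReluNetwork

namespace ReluNetwork

variable {D₁ D₂ d k m : ℕ} (n1 : ReluNetwork D₁ d k) (n2 : ReluNetwork D₂ k m)

lemma comp_frobSq_lt {ℓ : ℕ} (h : ℓ < D₁) :
    frobSq ((comp n1 n2).A ℓ) = frobSq (n1.A ℓ) := by
  unfold frobSq
  refine Fintype.sum_equiv (finCongr (compN_le n1 n2 (by omega : ℓ + 1 ≤ D₁))) _ _ (fun i => ?_)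
  refine Fintype.sum_equiv (finCongr (compN_le n1 n2 h.le)) _ _ (fun j => ?_)
  rw [comp_A_lt n1 n2 h i j]; rfl

lemma comp_sqNorm_lt {ℓ : ℕ} (h : ℓ < D₁) :
    sqNorm ((comp n1 n2).b ℓ) = sqNorm (n1.b ℓ) := by
  unfold sqNorm
  refine Fintype.sum_equiv (finCongr (compN_le n1 n2 (by omega : ℓ + 1 ≤ D₁))) _ _ (fun i => ?_)
  rw [comp_b_lt n1 n2 h i]; rfl

lemma comp_frobSq_gt {ℓ : ℕ} (h : 1 ≤ ℓ) :
    frobSq ((comp n1 n2).A (D₁ + ℓ)) = frobSq (n2.A ℓ) := by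
  unfold frobSq
  refine Fintype.sum_equiv (finCongr (compN_add_one n1 n2 ℓ)) _ _ (fun i => ?_)
  refine Fintype.sum_equiv (finCongr (compN_add n1 n2 h)) _ _ (fun j => ?_)
  rw [comp_A_gt' n1 n2 h i j]; rfl

lemma comp_sqNorm_gt {ℓ : ℕ} (h : 1 ≤ ℓ) :
    sqNorm ((comp n1 n2).b (D₁ + ℓ)) = sqNorm (n2.b ℓ) := by
  unfold sqNorm
  refine Fintype.sum_equiv (finCongr (compN_add_one n1 n2 ℓ)) _ _ (fun i => ?_)
  rw [comp_b_gt' n1 n2 h i]; rfl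

lemma comp_sqNorm_eq : sqNorm ((comp n1 n2).b D₁) = sqNorm (n2.b 0) := by
  unfold sqNorm
  refine Fintype.sum_equiv (finCongr (compN_D1succ n1 n2)) _ _ (fun i => ?_)
  rw [comp_b_eq n1 n2 i]; rfl

lemma comp_frobSq_merged :
    frobSq ((comp n1 n2).A D₁) ≤ frobSq (n2.A 0) * frobSq (n1.A D₁) := by
  have e : n1.N (D₁ + 1) = n2.N 0 := n1.hNlast.trans n2.hN0.symm
  have h1 : frobSq ((comp n1 n2).A D₁)
      = frobSq (fun (i : Fin (n2.N 1)) (j : Fin (n1.N D₁)) =>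
          ∑ l : Fin (n1.N (D₁ + 1)), n2.A 0 i (Fin.cast e l) * n1.A D₁ l j) := by
    unfold frobSq
    refine Fintype.sum_equiv (finCongr (compN_D1succ n1 n2)) _ _ (fun i => ?_)
    refine Fintype.sum_equiv (finCongr (compN_le n1 n2 le_rfl)) _ _ (fun j => ?_)
    rw [comp_A_eq n1 n2 i j]; rfl
  have h2 : frobSq (fun (i : Fin (n2.N 1)) (l : Fin (n1.N (D₁ + 1))) => n2.A 0 i (Fin.cast e l))
      = frobSq (n2.A 0) := frobSq_cast rfl e (n2.A 0)
  calc frobSq ((comp n1 n2).A D₁)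
      = frobSq (fun (i : Fin (n2.N 1)) (j : Fin (n1.N D₁)) =>
          ∑ l : Fin (n1.N (D₁ + 1)), n2.A 0 i (Fin.cast e l) * n1.A D₁ l j) := h1
    _ ≤ frobSq (fun (i : Fin (n2.N 1)) (l : Fin (n1.N (D₁ + 1))) => n2.A 0 i (Fin.cast e l))
          * frobSq (n1.A D₁) := frobSq_mul_le _ _
    _ = frobSq (n2.A 0) * frobSq (n1.A D₁) := by rw [h2]

lemma comp_frobSq_top {E : ℕ} (n2 : ReluNetwork (E + 1) k m) :
    frobSq ((comp n1 n2).A (D₁ + (E + 1))) = frobSq (n2.A (E + 1)) :=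
  comp_frobSq_gt n1 n2 (by omega)

lemma comp_widthLe {W₁ W₂ : ℕ} (h1 : n1.widthLe W₁) (h2 : n2.widthLe W₂) :
    (comp n1 n2).widthLe (max W₁ W₂) := by
  intro ℓ h0 hle
  by_cases hc : ℓ ≤ D₁
  · have e : (comp n1 n2).N ℓ = n1.N ℓ := compN_le n1 n2 hc
    rw [e]; exact le_trans (h1 ℓ h0 hc) (le_max_left _ _)
  · have e : (comp n1 n2).N ℓ = n2.N (ℓ - D₁) := compN_gt n1 n2 (by omega)
    rw [e]; exact le_trans (h2 _ (by omega) (by omega)) (le_max_right _ _)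

end ReluNetwork

/-- **Composition.** If `φ₁ ∈ NN(W₁, D₁, K₁)` has output dimension equal to the
input dimension of `φ₂ ∈ NN(W₂, D₂, K₂)`, then
`φ₂ ∘ φ₁ ∈ NN(max W₁ W₂, D₁ + D₂, (√2)^{D₁} K₂ √(K₁² + 2))`. -/
theorem composition_NN (d k m W₁ W₂ D₁ D₂ : ℕ) (K₁ K₂ : ℝ)
    (φ₁ : (Fin d → ℝ) → Fin k → ℝ) (φ₂ : (Fin k → ℝ) → Fin m → ℝ)
    (h₁ : φ₁ ∈ NNclass d k W₁ D₁ K₁) (h₂ : φ₂ ∈ NNclass k m W₂ D₂ K₂) :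
    (fun x => φ₂ (φ₁ x)) ∈
      NNclass d m (max W₁ W₂) (D₁ + D₂)
        (Real.sqrt 2 ^ D₁ * K₂ * Real.sqrt (K₁ ^ 2 + 2)) := by
  classical
  obtain ⟨m1, hw1, hk1, hr1⟩ := h₁
  obtain ⟨n2, hw2, hk2, hr2⟩ := h₂
  set n1 := m1.normalized with hn1
  have hK1 : (0:ℝ) ≤ K₁ := le_trans m1.kappa_nonneg hk1
  have hK2 : (0:ℝ) ≤ K₂ := le_trans n2.kappa_nonneg hk2
  have hkap1 : n1.kappa ≤ Real.sqrt 2 ^ D₁ * K₁ :=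
    le_trans m1.normalized_kappa (mul_le_mul_of_nonneg_left hk1 (by positivity))
  have hr1' : n1.realize = φ₁ := m1.normalized_realize.trans hr1
  have hbd : ∀ ℓ < D₁, frobSq (n1.A ℓ) + sqNorm (n1.b ℓ) ≤ 1 :=
    fun ℓ h => m1.normalized_bound ℓ h
  refine ⟨ReluNetwork.comp n1 n2, ReluNetwork.comp_widthLe n1 n2 hw1 hw2, ?_, ?_⟩
  swap
  · rw [ReluNetwork.comp_realize, hr1', hr2]
  -- kappa bound
  set P1 : ℝ := ∏ ℓ ∈ Finset.range D₁,
    Real.sqrt (frobSq (n1.A ℓ) + sqNorm (n1.b ℓ) + 1) with hP1def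
  have hP1nn : 0 ≤ P1 := Finset.prod_nonneg (fun ℓ _ => Real.sqrt_nonneg _)
  have hP1 : P1 ≤ Real.sqrt 2 ^ D₁ := by
    calc P1 ≤ ∏ _ℓ ∈ Finset.range D₁, Real.sqrt 2 := by
          apply Finset.prod_le_prod (fun ℓ _ => Real.sqrt_nonneg _)
          intro ℓ hl
          apply Real.sqrt_le_sqrt
          have := hbd ℓ (Finset.mem_range.1 hl)
          linarith
      _ = Real.sqrt 2 ^ D₁ := by rw [Finset.prod_const, Finset.card_range]
  have hP1sq : P1 ^ 2 ≤ 2 ^ D₁ := by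
    calc P1 ^ 2 ≤ (Real.sqrt 2 ^ D₁) ^ 2 := pow_le_pow_left₀ hP1nn hP1 2
      _ = 2 ^ D₁ := by
          rw [← pow_mul, mul_comm D₁ 2, pow_mul, Real.sq_sqrt (by norm_num : (0:ℝ) ≤ 2)]
  set a2 : ℝ := frobSq (n1.A D₁) with ha2def
  set sa2 : ℝ := frobSq (n2.A 0) with hsa2def
  set t : ℝ := sqNorm (n2.b 0) with htdef
  have ha2nn : 0 ≤ a2 := frobSq_nonneg _
  have hsa2nn : 0 ≤ sa2 := frobSq_nonneg _
  have htnn : 0 ≤ t := sqNorm_nonneg _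
  have h8 : Real.sqrt a2 * P1 ≤ Real.sqrt 2 ^ D₁ * K₁ := hkap1
  have ha2P : a2 * P1 ^ 2 ≤ 2 ^ D₁ * K₁ ^ 2 := by
    have h9 := pow_le_pow_left₀ (mul_nonneg (Real.sqrt_nonneg _) hP1nn) h8 2
    calc a2 * P1 ^ 2 = (Real.sqrt a2 * P1) ^ 2 := by
          rw [mul_pow, Real.sq_sqrt ha2nn]
      _ ≤ (Real.sqrt 2 ^ D₁ * K₁) ^ 2 := h9
      _ = 2 ^ D₁ * K₁ ^ 2 := by
          rw [mul_pow, ← pow_mul, mul_comm D₁ 2, pow_mul,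
            Real.sq_sqrt (by norm_num : (0:ℝ) ≤ 2)]
  have hrad : P1 ^ 2 * (sa2 * a2 + t + 1) ≤ 2 ^ D₁ * ((K₁ ^ 2 + 2) * (sa2 + t + 1)) := by
    have e3 : sa2 * (a2 * P1 ^ 2) ≤ sa2 * (2 ^ D₁ * K₁ ^ 2) :=
      mul_le_mul_of_nonneg_left ha2P hsa2nn
    have e4 : P1 ^ 2 * (t + 1) ≤ 2 ^ D₁ * (t + 1) :=
      mul_le_mul_of_nonneg_right hP1sq (by linarith)
    have e5 : (0:ℝ) ≤ 2 ^ D₁ * (K₁ ^ 2 * (t + 1)) := by positivity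
    have e6 : (0:ℝ) ≤ 2 ^ D₁ * sa2 := by positivity
    have e7 : (0:ℝ) ≤ 2 ^ D₁ * (t + 1) := by positivity
    nlinarith [e3, e4, e5, e6, e7]
  have key : P1 * Real.sqrt (sa2 * a2 + t + 1)
      ≤ Real.sqrt 2 ^ D₁ * Real.sqrt (K₁ ^ 2 + 2) * Real.sqrt (sa2 + t + 1) := by
    have e1 : P1 * Real.sqrt (sa2 * a2 + t + 1)
        = Real.sqrt (P1 ^ 2 * (sa2 * a2 + t + 1)) := by
      rw [Real.sqrt_mul (by positivity), Real.sqrt_sq hP1nn]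
    have e2 : Real.sqrt 2 ^ D₁ * Real.sqrt (K₁ ^ 2 + 2) * Real.sqrt (sa2 + t + 1)
        = Real.sqrt (2 ^ D₁ * ((K₁ ^ 2 + 2) * (sa2 + t + 1))) := by
      rw [sqrt_two_pow, ← Real.sqrt_mul (by positivity), ← Real.sqrt_mul (by positivity)]
      ring_nf
    rw [e1, e2]
    exact Real.sqrt_le_sqrt hrad
  have hmerged : frobSq ((ReluNetwork.comp n1 n2).A D₁) ≤ sa2 * a2 :=
    ReluNetwork.comp_frobSq_merged n1 n2
  have hbD1 : sqNorm ((ReluNetwork.comp n1 n2).b D₁) = t := ReluNetwork.comp_sqNorm_eq n1 n2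
  have hKfac : Real.sqrt 2 ^ D₁ * K₂ * Real.sqrt (K₁ ^ 2 + 2)
      = K₂ * (Real.sqrt 2 ^ D₁ * Real.sqrt (K₁ ^ 2 + 2)) := by ring
  have hK1le : K₁ ≤ Real.sqrt (K₁ ^ 2 + 2) := by
    have h0 : (0:ℝ) ≤ K₁ ^ 2 + 2 := by positivity
    nlinarith [Real.sq_sqrt h0, Real.sqrt_nonneg (K₁ ^ 2 + 2)]
  have hP1c : ∏ ℓ ∈ Finset.range D₁,
      Real.sqrt (frobSq ((ReluNetwork.comp n1 n2).A ℓ)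
        + sqNorm ((ReluNetwork.comp n1 n2).b ℓ) + 1) = P1 := by
    apply Finset.prod_congr rfl
    intro ℓ hl
    rw [ReluNetwork.comp_frobSq_lt n1 n2 (Finset.mem_range.1 hl),
      ReluNetwork.comp_sqNorm_lt n1 n2 (Finset.mem_range.1 hl)]
  rcases D₂ with _ | E
  · -- D₂ = 0
    have hk2' : Real.sqrt sa2 ≤ K₂ := by
      have e : n2.kappa = Real.sqrt sa2 := by
        unfold ReluNetwork.kappa
        rw [Finset.prod_range_zero, mul_one]
        rfl
      linarith [e ▸ hk2]
    have hprod0 : ∏ ℓ ∈ Finset.range (D₁ + 0),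
        Real.sqrt (frobSq ((ReluNetwork.comp n1 n2).A ℓ)
          + sqNorm ((ReluNetwork.comp n1 n2).b ℓ) + 1) = P1 := by
      rw [Finset.prod_range_add]
      rw [Finset.prod_range_zero, mul_one]
      exact hP1c
    have htop : frob ((ReluNetwork.comp n1 n2).A (D₁ + 0))
        ≤ Real.sqrt sa2 * Real.sqrt a2 := by
      have hm : frobSq ((ReluNetwork.comp n1 n2).A (D₁ + 0)) ≤ sa2 * a2 := hmerged
      calc frob ((ReluNetwork.comp n1 n2).A (D₁ + 0))
          ≤ Real.sqrt (sa2 * a2) := Real.sqrt_le_sqrt hm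
        _ = Real.sqrt sa2 * Real.sqrt a2 := Real.sqrt_mul hsa2nn a2
    have c1 : (ReluNetwork.comp n1 n2).kappa ≤ (Real.sqrt sa2 * Real.sqrt a2) * P1 := by
      unfold ReluNetwork.kappa
      rw [hprod0]
      exact mul_le_mul_of_nonneg_right htop hP1nn
    have c4 : (Real.sqrt sa2 * Real.sqrt a2) * P1 ≤ K₂ * (Real.sqrt 2 ^ D₁ * K₁) := by
      rw [mul_assoc]
      exact mul_le_mul hk2' h8 (mul_nonneg (Real.sqrt_nonneg _) hP1nn) hK2
    have c5 : K₂ * (Real.sqrt 2 ^ D₁ * K₁)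
        ≤ K₂ * (Real.sqrt 2 ^ D₁ * Real.sqrt (K₁ ^ 2 + 2)) := by
      apply mul_le_mul_of_nonneg_left _ hK2
      exact mul_le_mul_of_nonneg_left hK1le (by positivity)
    rw [hKfac]
    linarith
  · -- D₂ = E + 1
    have hQnn : (0:ℝ) ≤ ∏ j ∈ Finset.range E,
        Real.sqrt (frobSq (n2.A (j + 1)) + sqNorm (n2.b (j + 1)) + 1) :=
      Finset.prod_nonneg (fun j _ => Real.sqrt_nonneg _)
    set Q : ℝ := ∏ j ∈ Finset.range E,
      Real.sqrt (frobSq (n2.A (j + 1)) + sqNorm (n2.b (j + 1)) + 1) with hQdef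
    have hkap2 : n2.kappa = frob (n2.A (E + 1)) * (Q * Real.sqrt (sa2 + t + 1)) := by
      unfold ReluNetwork.kappa
      rw [Finset.prod_range_succ']
    have hQ'c : ∏ j ∈ Finset.range E,
        Real.sqrt (frobSq ((ReluNetwork.comp n1 n2).A (D₁ + (j + 1)))
          + sqNorm ((ReluNetwork.comp n1 n2).b (D₁ + (j + 1))) + 1) = Q := by
      apply Finset.prod_congr rfl
      intro j _
      rw [ReluNetwork.comp_frobSq_gt n1 n2 (by omega : 1 ≤ j + 1),
        ReluNetwork.comp_sqNorm_gt n1 n2 (by omega : 1 ≤ j + 1)]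
    have hprod : ∏ ℓ ∈ Finset.range (D₁ + (E + 1)),
        Real.sqrt (frobSq ((ReluNetwork.comp n1 n2).A ℓ)
          + sqNorm ((ReluNetwork.comp n1 n2).b ℓ) + 1)
        = P1 * (Q * Real.sqrt (frobSq ((ReluNetwork.comp n1 n2).A (D₁ + 0))
            + sqNorm ((ReluNetwork.comp n1 n2).b (D₁ + 0)) + 1)) := by
      rw [Finset.prod_range_add, hP1c, Finset.prod_range_succ', hQ'c]
    have htopE : frob ((ReluNetwork.comp n1 n2).A (D₁ + (E + 1))) = frob (n2.A (E + 1)) := by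
      unfold frob
      rw [ReluNetwork.comp_frobSq_gt n1 n2 (by omega : 1 ≤ E + 1)]
    have hg : Real.sqrt (frobSq ((ReluNetwork.comp n1 n2).A (D₁ + 0))
        + sqNorm ((ReluNetwork.comp n1 n2).b (D₁ + 0)) + 1)
        ≤ Real.sqrt (sa2 * a2 + t + 1) := by
      apply Real.sqrt_le_sqrt
      have h1 : frobSq ((ReluNetwork.comp n1 n2).A (D₁ + 0)) ≤ sa2 * a2 := hmerged
      have h2 : sqNorm ((ReluNetwork.comp n1 n2).b (D₁ + 0)) = t := hbD1
      linarith
    have A1 : P1 * Real.sqrt (frobSq ((ReluNetwork.comp n1 n2).A (D₁ + 0))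
        + sqNorm ((ReluNetwork.comp n1 n2).b (D₁ + 0)) + 1)
        ≤ Real.sqrt 2 ^ D₁ * Real.sqrt (K₁ ^ 2 + 2) * Real.sqrt (sa2 + t + 1) :=
      le_trans (mul_le_mul_of_nonneg_left hg hP1nn) key
    have hF2nn : (0:ℝ) ≤ frob (n2.A (E + 1)) := frob_nonneg _
    rw [hKfac]
    calc (ReluNetwork.comp n1 n2).kappa
        = (frob (n2.A (E + 1)) * Q)
          * (P1 * Real.sqrt (frobSq ((ReluNetwork.comp n1 n2).A (D₁ + 0))
              + sqNorm ((ReluNetwork.comp n1 n2).b (D₁ + 0)) + 1)) := by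
          unfold ReluNetwork.kappa
          rw [hprod, htopE]
          ring
      _ ≤ (frob (n2.A (E + 1)) * Q)
          * (Real.sqrt 2 ^ D₁ * Real.sqrt (K₁ ^ 2 + 2) * Real.sqrt (sa2 + t + 1)) :=
          mul_le_mul_of_nonneg_left A1 (mul_nonneg hF2nn hQnn)
      _ = (frob (n2.A (E + 1)) * (Q * Real.sqrt (sa2 + t + 1)))
          * (Real.sqrt 2 ^ D₁ * Real.sqrt (K₁ ^ 2 + 2)) := by ring
      _ = n2.kappa * (Real.sqrt 2 ^ D₁ * Real.sqrt (K₁ ^ 2 + 2)) := by rw [hkap2]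
      _ ≤ K₂ * (Real.sqrt 2 ^ D₁ * Real.sqrt (K₁ ^ 2 + 2)) :=
          mul_le_mul_of_nonneg_right hk2 (by positivity)
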